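/- Let A = [[α,0],[0,0]] be a 2×2 complex matrix with α ≠ 0, and let B be a nonzero 2×2 complex matrix with det(B) = 0. Then there exists (x,y) ∈ ℂ² with (x,y) ≠ (0,0) such that, with U = U(x,y) = (1/√(|x|²+|y|²))·[[x,y],[-ȳ,x̄]] and Z = diag(1,-1), there is a nonzero row vector v ∈ ℂ² for which all four rows of the two matrices A·U and B·U·Z are complex scalar multiples of v. -/

import Mathlib

open Matrix Complex
open scoped ComplexConjugate

noncomputable section

/-- The unitary matrix `U(x,y) = (1/√(|x|²+|y|²))·[[x,y],[-ȳ,x̄]]`. -/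
def Umat (x y : ℂ) : Matrix (Fin 2) (Fin 2) ℂ :=
  ((((Real.sqrt (normSq x + normSq y))⁻¹ : ℝ) : ℂ)) • !![x, y; -(conj y), conj x]

/-- Lemma on two matrices: for `A = [[α,0],[0,0]]` with `α ≠ 0` and a nonzero
`B` with `det B = 0`, there is `(x,y) ≠ (0,0)` such that all four rows of `A·U(x,y)` and
`B·U(x,y)·Z` are multiples of a single nonzero row vector, where `Z = diag(1,-1)`. -/
theorem stmt_6 (α : ℂ) (hα : α ≠ 0) (B : Matrix (Fin 2) (Fin 2) ℂ)
    (hB : B ≠ 0) (hdet : B.det = 0) :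
    ∃ x y : ℂ, (x, y) ≠ (0, 0) ∧
      ∃ v : Fin 2 → ℂ, v ≠ 0 ∧
        (∀ r : Fin 2, ∃ c : ℂ, (!![α, 0; 0, 0] * Umat x y) r = c • v) ∧
        (∀ r : Fin 2, ∃ c : ℂ, (B * Umat x y * !![(1 : ℂ), 0; 0, -1]) r = c • v) := by
  have hdet2 : B 0 0 * B 1 1 - B 0 1 * B 1 0 = 0 := by
    rw [← Matrix.det_fin_two]; exact hdet
  -- rank-one decomposition of B
  obtain ⟨w0, w1, hw, hrow⟩ : ∃ w0 w1 : ℂ, ¬(w0 = 0 ∧ w1 = 0) ∧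
      ∀ r : Fin 2, ∃ d : ℂ, B r 0 = d * w0 ∧ B r 1 = d * w1 := by
    by_cases h00 : B 0 0 = 0
    · by_cases h01 : B 0 1 = 0
      · refine ⟨B 1 0, B 1 1, ?_, ?_⟩
        · rintro ⟨ha, hb2⟩
          apply hB
          ext i j
          fin_cases i <;> fin_cases j <;> simp [h00, h01, ha, hb2]
        · intro r
          fin_cases r
          · exact ⟨0, by simp [h00, h01]⟩
          · exact ⟨1, by simp⟩
      · have h10 : B 1 0 = 0 := by
          have h : B 0 1 * B 1 0 = 0 := by linear_combination -hdet2 + B 1 1 * h00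
          rcases mul_eq_zero.mp h with h' | h'
          · exact absurd h' h01
          · exact h'
        refine ⟨0, B 0 1, by rintro ⟨-, h⟩; exact h01 h, ?_⟩
        intro r
        fin_cases r
        · exact ⟨1, by simp [h00]⟩
        · refine ⟨B 1 1 / B 0 1, by simp [h10], by field_simp; rfl⟩
    · refine ⟨B 0 0, B 0 1, by rintro ⟨h, -⟩; exact h00 h, ?_⟩
      intro r
      fin_cases r
      · exact ⟨1, by simp⟩
      · refine ⟨B 1 0 / B 0 0, by field_simp; rfl, ?_⟩
        change B 1 1 = B 1 0 / B 0 0 * B 0 1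
        field_simp
        linear_combination hdet2
  -- choose x, y with x ≠ 0 and the key proportionality identity
  obtain ⟨x, y, hx, hkey⟩ : ∃ x y : ℂ, x ≠ 0 ∧
      2 * w0 * x * y + w1 * (x * conj x - y * conj y) = 0 := by
    by_cases h1 : w1 = 0
    · exact ⟨1, 0, one_ne_zero, by simp [h1]⟩
    · by_cases h0 : w0 = 0
      · exact ⟨1, 1, one_ne_zero, by simp [h0]⟩
      · set b : ℝ := 1 + Real.sqrt (1 + normSq w1 / normSq w0) with hbdef
        have hn0 : normSq w0 ≠ 0 := by simpa [Complex.normSq_eq_zero] using h0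
        have hq : (0:ℝ) ≤ 1 + normSq w1 / normSq w0 := by
          have := div_nonneg (normSq_nonneg w1) (normSq_nonneg w0)
          linarith
        have hs : Real.sqrt (1 + normSq w1 / normSq w0) ^ 2
            = 1 + normSq w1 / normSq w0 := Real.sq_sqrt hq
        have hq2 : normSq w0 * (normSq w1 / normSq w0) = normSq w1 := by
          field_simp
        have hb : (normSq w0) * b ^ 2 = 2 * (normSq w0) * b + normSq w1 := by
          rw [hbdef]
          linear_combination normSq w0 * hs + hq2
        have hbC : ((normSq w0 : ℂ)) * (b : ℂ) ^ 2
            = 2 * (normSq w0 : ℂ) * (b : ℂ) + (normSq w1 : ℂ) := by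
          exact_mod_cast hb
        have h0c : w0 * conj w0 = (normSq w0 : ℂ) := Complex.mul_conj w0
        have h1c : w1 * conj w1 = (normSq w1 : ℂ) := Complex.mul_conj w1
        refine ⟨w1, conj w0 * (b : ℂ), h1, ?_⟩
        simp only [_root_.map_mul, Complex.conj_conj, Complex.conj_ofReal]
        linear_combination (2 * w1 * (b:ℂ) - w1 * (b:ℂ)^2) * h0c + w1 * h1c - w1 * hbC
  -- conclude
  set s : ℂ := (((Real.sqrt (normSq x + normSq y))⁻¹ : ℝ) : ℂ) with hsdef
  refine ⟨x, y, ?_, ![x, y], ?_, ?_, ?_⟩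
  · intro h
    exact hx (by simpa using congrArg Prod.fst h)
  · intro h
    exact hx (congrFun h 0)
  · intro r
    fin_cases r
    · refine ⟨α * s, ?_⟩
      funext j
      fin_cases j <;>
        simp [Umat, Matrix.mul_apply, Fin.sum_univ_two, hsdef] <;> ring
    · refine ⟨0, ?_⟩
      funext j
      fin_cases j <;> simp [Umat, Matrix.mul_apply, Fin.sum_univ_two]
  · intro r
    obtain ⟨d, hd0, hd1⟩ := hrow r
    refine ⟨d * (s * (w0 * x - w1 * conj y) / x), ?_⟩
    funext j
    fin_cases j
    · show (B * Umat x y * !![(1 : ℂ), 0; 0, -1]) r 0 = ((d * (s * (w0 * x - w1 * conj y) / x)) • ![x, y]) 0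
      simp only [Umat, Matrix.mul_apply, Fin.sum_univ_two, hd0, hd1, ← hsdef,
        Matrix.smul_apply, Matrix.cons_val', Matrix.cons_val_zero, Matrix.cons_val_one,
        Matrix.head_cons, Matrix.head_fin_const, Matrix.empty_val', Matrix.cons_val_fin_one,
        Pi.smul_apply, smul_eq_mul, Matrix.of_apply, Matrix.cons_val_one, Fin.isValue]
      field_simp
      ring
    · show (B * Umat x y * !![(1 : ℂ), 0; 0, -1]) r 1 = ((d * (s * (w0 * x - w1 * conj y) / x)) • ![x, y]) 1
      simp only [Umat, Matrix.mul_apply, Fin.sum_univ_two, hd0, hd1, ← hsdef,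
        Matrix.smul_apply, Matrix.cons_val', Matrix.cons_val_zero, Matrix.cons_val_one,
        Matrix.head_cons, Matrix.head_fin_const, Matrix.empty_val', Matrix.cons_val_fin_one,
        Pi.smul_apply, smul_eq_mul, Matrix.of_apply, Fin.isValue]
      field_simp
      linear_combination (-(d * s)) * hkey
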